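/- For q > 1, the ratio q^{N−1}·C_{N−1}(q) / C_N(q) converges to 1 as N → ∞, where C_N(q) is the Carlitz–Riordan q-Catalan number. -/

import Mathlib

open Finset

def dheight (w : List Bool) (k : ℕ) : ℤ :=
  ((w.take k).map (fun b => if b then (1 : ℤ) else -1)).sum

def IsDyck (w : List Bool) : Prop :=
  (∀ k ∈ Finset.range (w.length + 1), 0 ≤ dheight w k) ∧ dheight w w.length = 0

def darea (w : List Bool) : ℤ :=
  ((∑ k ∈ Finset.range w.length, dheight w (k + 1)) - (w.length : ℤ) / 2) / 2

def dreturns (w : List Bool) : ℕ :=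
  ((Finset.Icc 1 w.length).filter (fun k => dheight w k = 0)).card

open scoped Classical in
noncomputable def Gqs (N : ℕ) (q s : ℝ) : ℝ :=
  ∑ f : Fin (2 * N) → Bool,
    if IsDyck (List.ofFn f)
    then q ^ (darea (List.ofFn f)).toNat * s ^ dreturns (List.ofFn f)
    else 0

-- height sum
def hs (w : List Bool) : ℤ := ∑ k ∈ Finset.range w.length, dheight w (k + 1)

lemma dheight_zero (w : List Bool) : dheight w 0 = 0 := rfl

lemma dheight_cons (b : Bool) (w : List Bool) (k : ℕ) :
    dheight (b :: w) (k + 1) = (if b then (1:ℤ) else -1) + dheight w k := by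
  simp [dheight, List.take_succ_cons]

lemma dheight_append_le (u v : List Bool) (k : ℕ) (h : k ≤ u.length) :
    dheight (u ++ v) k = dheight u k := by
  simp [dheight, List.take_append_of_le_length h]

lemma dheight_append_add (u v : List Bool) (k : ℕ) :
    dheight (u ++ v) (u.length + k) = dheight u u.length + dheight v k := by
  simp [dheight, List.take_append, List.take_of_length_le]

lemma dheight_nil (k : ℕ) : dheight [] k = 0 := by simp [dheight]

lemma sum_map_le (l : List Bool) :
    ((l.map (fun b => if b then (1:ℤ) else -1)).sum) ≤ l.length := by
  induction l with
  | nil => simp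
  | cons b t ih =>
    simp only [List.map_cons, List.sum_cons, List.length_cons]
    have : (if b then (1:ℤ) else -1) ≤ 1 := by split <;> norm_num
    push_cast; linarith

lemma neg_length_le_sum_map (l : List Bool) :
    -(l.length : ℤ) ≤ ((l.map (fun b => if b then (1:ℤ) else -1)).sum) := by
  induction l with
  | nil => simp
  | cons b t ih =>
    simp only [List.map_cons, List.sum_cons, List.length_cons]
    have : (-1:ℤ) ≤ (if b then (1:ℤ) else -1) := by split <;> norm_num
    push_cast; linarith

lemma dheight_le (w : List Bool) (k : ℕ) : dheight w k ≤ k := by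
  calc dheight w k ≤ ((w.take k).length : ℤ) := sum_map_le _
    _ ≤ k := by simp

-- the height can drop at most by one per step
lemma dheight_ge_of_le (w : List Bool) (k L : ℕ) (hkL : k ≤ L) :
    dheight w L - (L - k : ℕ) ≤ dheight w k := by
  have hsplit : w.take L = w.take k ++ ((w.take L).drop k) := by
    conv_lhs => rw [← List.take_append_drop k (w.take L)]
    rw [List.take_take, min_eq_left hkL]
  have : dheight w L =
      dheight w k + (((w.take L).drop k).map (fun b => if b then (1:ℤ) else -1)).sum := by
    conv_lhs => rw [dheight, hsplit]
    rw [List.map_append, List.sum_append]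
    rfl
  have h2 := sum_map_le ((w.take L).drop k)
  have h3 : (((w.take L).drop k).length : ℤ) ≤ (L - k : ℕ) := by
    simp only [List.length_drop, List.length_take]
    have := Nat.sub_le_sub_right (min_le_left L w.length) k
    exact_mod_cast Int.ofNat_le.mpr this
  linarith

-- parity
lemma dheight_parity (w : List Bool) (k : ℕ) (h : k ≤ w.length) :
    (2 : ℤ) ∣ dheight w k - k := by
  induction k with
  | zero => simp [dheight]
  | succ n ih =>
    have hn : n < w.length := h
    have hstep : dheight w (n + 1) = dheight w n + (if w[n] then (1:ℤ) else -1) := by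
      have hn' : n < (w.map (fun b => if b then (1:ℤ) else -1)).length := by simpa using hn
      simp only [dheight, List.map_take]
      rw [List.sum_take_succ _ _ hn']
      simp [hn]
    rcases ih (le_of_lt hn) with ⟨c, hc⟩
    rw [hstep]
    split
    · exact ⟨c, by push_cast; linarith⟩
    · exact ⟨c - 1, by push_cast; linarith⟩

lemma dheight_le_of_le (w : List Bool) (k L : ℕ) (hkL : k ≤ L) :
    dheight w k ≤ dheight w L + (L - k : ℕ) := by
  have hsplit : w.take L = w.take k ++ ((w.take L).drop k) := by
    conv_lhs => rw [← List.take_append_drop k (w.take L)]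
    rw [List.take_take, min_eq_left hkL]
  have heq : dheight w L =
      dheight w k + (((w.take L).drop k).map (fun b => if b then (1:ℤ) else -1)).sum := by
    conv_lhs => rw [dheight, hsplit]
    rw [List.map_append, List.sum_append]
    rfl
  have h2 := neg_length_le_sum_map ((w.take L).drop k)
  have h3 : (((w.take L).drop k).length : ℤ) ≤ (L - k : ℕ) := by
    simp only [List.length_drop, List.length_take]
    have := Nat.sub_le_sub_right (min_le_left L w.length) k
    exact_mod_cast Int.ofNat_le.mpr this
  linarith

section comp

variable (w1 w2 : List Bool)

local notation "W" => true :: w1 ++ false :: w2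

lemma comp_length : (W).length = w1.length + w2.length + 2 := by
  simp; omega

lemma dh_comp1 (k : ℕ) (hk : k ≤ w1.length) :
    dheight (W) (k + 1) = 1 + dheight w1 k := by
  have : (true :: w1 ++ false :: w2) = true :: (w1 ++ false :: w2) := by simp
  rw [this, dheight_cons, dheight_append_le _ _ _ hk]
  simp

lemma dh_comp2 (j : ℕ) :
    dheight (W) (w1.length + 2 + j) = dheight w1 w1.length + dheight w2 j := by
  have e1 : (true :: w1 ++ false :: w2) = true :: (w1 ++ false :: w2) := by simp
  have e2 : w1.length + 2 + j = (w1.length + (1 + j)) + 1 := by omega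
  rw [e1, e2, dheight_cons, dheight_append_add]
  have : (1 + j) = j + 1 := by omega
  rw [this, dheight_cons]
  norm_num
  ring

end comp

lemma isDyck_iff (w : List Bool) :
    IsDyck w ↔ (∀ k, k ≤ w.length → 0 ≤ dheight w k) ∧ dheight w w.length = 0 := by
  simp [IsDyck, Finset.mem_range, Nat.lt_succ_iff]

lemma hs_comp (w1 w2 : List Bool) :
    hs (true :: w1 ++ false :: w2) =
      hs w1 + hs w2 + (w1.length + 1) + (w2.length + 1) * dheight w1 w1.length := by
  set a := w1.length
  set b := w2.length
  have hlen : (true :: w1 ++ false :: w2).length = (a + 1) + (b + 1) := by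
    simp [a, b]; omega
  rw [hs, hlen, Finset.sum_range_add]
  have e1 : ∑ k ∈ Finset.range (a + 1), dheight (true :: w1 ++ false :: w2) (k + 1)
      = ∑ k ∈ Finset.range (a + 1), (1 + dheight w1 k) := by
    apply Finset.sum_congr rfl
    intro k hk
    exact dh_comp1 w1 w2 k (by simpa [Nat.lt_succ_iff] using hk)
  have e2 : ∑ j ∈ Finset.range (b + 1), dheight (true :: w1 ++ false :: w2) ((a + 1 + j) + 1)
      = ∑ j ∈ Finset.range (b + 1), (dheight w1 a + dheight w2 j) := by
    apply Finset.sum_congr rfl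
    intro j hj
    have : a + 1 + j + 1 = a + 2 + j := by omega
    rw [this]
    exact dh_comp2 w1 w2 j
  rw [e1, e2, Finset.sum_add_distrib, Finset.sum_add_distrib]
  have s1 : ∑ k ∈ Finset.range (a + 1), dheight w1 k = hs w1 := by
    rw [Finset.sum_range_succ' (fun k => dheight w1 k) a, dheight_zero]
    simp [hs, a]
  have s2 : ∑ j ∈ Finset.range (b + 1), dheight w2 j = hs w2 := by
    rw [Finset.sum_range_succ' (fun k => dheight w2 k) b, dheight_zero]
    simp [hs, b]
  rw [s1, s2]
  simp [Finset.sum_const]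
  push_cast
  ring

lemma isDyck_comp (w1 w2 : List Bool) (h1 : IsDyck w1) (h2 : IsDyck w2) :
    IsDyck (true :: w1 ++ false :: w2) := by
  rw [isDyck_iff] at h1 h2 ⊢
  set a := w1.length
  set b := w2.length
  have hlen : (true :: w1 ++ false :: w2).length = a + b + 2 := comp_length w1 w2
  constructor
  · intro k hk
    rw [hlen] at hk
    rcases Nat.eq_zero_or_pos k with h0 | hpos
    · simp [h0, dheight_zero]
    · by_cases hsmall : k ≤ a + 1
      · obtain ⟨k', rfl⟩ : ∃ k', k = k' + 1 := ⟨k - 1, by omega⟩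
        rw [dh_comp1 w1 w2 k' (by omega)]
        have := h1.1 k' (by omega)
        linarith
      · obtain ⟨j, rfl⟩ : ∃ j, k = a + 2 + j := ⟨k - a - 2, by omega⟩
        rw [dh_comp2 w1 w2 j, h1.2]
        have := h2.1 j (by omega)
        linarith
  · rw [hlen]
    have : a + b + 2 = a + 2 + b := by omega
    rw [this, dh_comp2 w1 w2 b, h1.2, h2.2]
    ring

lemma gauss (n : ℕ) : (∑ k ∈ Finset.range n, (k:ℤ)) * 2 = n * (n - 1) := by
  induction n with
  | zero => simp
  | succ n ih =>
    rw [Finset.sum_range_succ]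
    push_cast
    push_cast at ih
    ring_nf
    ring_nf at ih
    linarith

lemma isDyck_length_even (w : List Bool) (h : IsDyck w) : ∃ m, w.length = 2 * m := by
  have hp := dheight_parity w w.length le_rfl
  rw [h.2] at hp
  rcases hp with ⟨c, hc⟩
  have : (w.length : ℤ) = 2 * (-c) := by linarith
  exact ⟨(-c).toNat, by omega⟩

lemma hs_parity (w : List Bool) (m : ℕ) (h : w.length = 2 * m) :
    (2:ℤ) ∣ hs w - m := by
  have h1 : (2:ℤ) ∣ hs w - ∑ k ∈ Finset.range (2*m), ((k:ℤ) + 1) := by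
    rw [hs, h, ← Finset.sum_sub_distrib]
    apply Finset.dvd_sum
    intro k hk
    have hk' : k + 1 ≤ w.length := by rw [h]; simp at hk; omega
    have := dheight_parity w (k+1) hk'
    push_cast at this ⊢
    convert this using 2
  have h2 : (∑ k ∈ Finset.range (2*m), ((k:ℤ) + 1)) = m * (2*m) + m := by
    rw [Finset.sum_add_distrib]
    simp only [Finset.sum_const, Finset.card_range, nsmul_eq_mul, mul_one]
    have := gauss (2*m)
    push_cast at this ⊢
    nlinarith [this]
  rcases h1 with ⟨c, hc⟩
  exact ⟨c + m * m, by rw [h2] at hc; linarith⟩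

lemma darea_eq (w : List Bool) (m : ℕ) (h : w.length = 2 * m) :
    darea w * 2 = hs w - m := by
  have hdvd := hs_parity w m h
  have hlen : ((w.length : ℤ)) / 2 = m := by rw [h]; push_cast; omega
  rw [darea, ← hs, hlen]
  exact Int.ediv_mul_cancel hdvd

lemma aux_ind_sum (m : ℕ) : ∑ k ∈ Finset.range (2*m), (if k % 2 = 0 then (1:ℤ) else 0) = m := by
  induction m with
  | zero => simp
  | succ n ih =>
    have : 2 * (n+1) = (2*n) + 1 + 1 := by omega
    rw [this, Finset.sum_range_succ, Finset.sum_range_succ, ih]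
    have h1 : (2*n) % 2 = 0 := by omega
    have h2 : (2*n+1) % 2 ≠ 0 := by omega
    simp [h1, h2]

lemma darea_nonneg (w : List Bool) (m : ℕ) (h : IsDyck w) (hl : w.length = 2 * m) :
    0 ≤ darea w := by
  rw [isDyck_iff] at h
  have key : (m : ℤ) ≤ hs w := by
    rw [hs, hl]
    calc (m:ℤ) = ∑ k ∈ Finset.range (2*m), (if k % 2 = 0 then (1:ℤ) else 0) :=
          (aux_ind_sum m).symm
      _ ≤ ∑ k ∈ Finset.range (2*m), dheight w (k+1) := by
          apply Finset.sum_le_sum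
          intro k hk
          simp only [Finset.mem_range] at hk
          have hk1 : k + 1 ≤ w.length := by omega
          have hge := h.1 (k+1) hk1
          split
          · rename_i hev
            have hpar := dheight_parity w (k+1) hk1
            rcases hpar with ⟨c, hc⟩
            by_contra hlt
            push_neg at hlt
            have : dheight w (k+1) = 0 := by omega
            rw [this] at hc
            omega
          · exact hge
  have := darea_eq w m hl
  linarith

lemma darea_le (w : List Bool) (m : ℕ) (h : IsDyck w) (hl : w.length = 2 * m) :
    (darea w).toNat ≤ m * (m-1) / 2 := by
  rw [isDyck_iff] at h
  have hend : dheight w w.length = 0 := h.2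
  have key : hs w * 2 ≤ 2 * (m:ℤ) * m := by
    rw [hs, hl]
    have hsplit : (2*m) = m + m := by omega
    rw [hsplit, Finset.sum_range_add]
    have b1 : (∑ k ∈ Finset.range m, dheight w (k+1)) * 2 ≤ m * (m+1) := by
      have : ∑ k ∈ Finset.range m, dheight w (k+1) ≤ ∑ k ∈ Finset.range m, ((k:ℤ)+1) := by
        apply Finset.sum_le_sum
        intro k _
        calc dheight w (k+1) ≤ ((k+1 : ℕ) : ℤ) := dheight_le w (k+1)
          _ = (k:ℤ) + 1 := by push_cast; ring
      have hg : (∑ k ∈ Finset.range m, ((k:ℤ)+1)) * 2 = m * (m+1) := by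
        rw [Finset.sum_add_distrib]
        simp only [Finset.sum_const, Finset.card_range, nsmul_eq_mul, mul_one]
        have := gauss m
        push_cast at this ⊢
        nlinarith [this]
      linarith
    have b2 : (∑ j ∈ Finset.range m, dheight w (m + j + 1)) * 2 ≤ m * ((m:ℤ) - 1) := by
      have hb : ∀ j ∈ Finset.range m, dheight w (m + j + 1) ≤ (m:ℤ) - 1 - j := by
        intro j hj
        simp only [Finset.mem_range] at hj
        have hle : m + j + 1 ≤ w.length := by omega
        have := dheight_le_of_le w (m + j + 1) w.length hle
        rw [hend, hl] at this
        have hc : ((2*m - (m + j + 1) : ℕ) : ℤ) = (m:ℤ) - 1 - j := by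
          have : m + j + 1 ≤ 2*m := by omega
          push_cast [Nat.cast_sub this]
          ring
        rw [hc] at this
        linarith
      have : ∑ j ∈ Finset.range m, dheight w (m + j + 1) ≤
          ∑ j ∈ Finset.range m, ((m:ℤ) - 1 - j) := Finset.sum_le_sum hb
      have hg : (∑ j ∈ Finset.range m, ((m:ℤ) - 1 - j)) * 2 = m * ((m:ℤ) - 1) := by
        rw [Finset.sum_sub_distrib]
        simp only [Finset.sum_const, Finset.card_range, nsmul_eq_mul, mul_one]
        have := gauss m
        push_cast at this ⊢
        nlinarith [this]
      linarith
    have : ∑ k ∈ Finset.range m, dheight w (k + 1) +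
        ∑ j ∈ Finset.range m, dheight w (m + j + 1) =
        ∑ k ∈ Finset.range m, dheight w (k+1) + ∑ j ∈ Finset.range m, dheight w (m + j + 1) := rfl
    nlinarith [b1, b2]
  have hde := darea_eq w m hl
  have h2 : darea w * 2 ≤ (m:ℤ) * ((m:ℤ) - 1) := by nlinarith
  have h3 : (m * (m-1) / 2 : ℕ) * 2 = m * (m - 1) := by
    have : 2 ∣ m * (m-1) := Nat.even_mul_pred_self m |>.two_dvd
    omega
  have h4 : ((m * (m-1) : ℕ) : ℤ) = (m:ℤ) * ((m:ℤ) - 1) ∨ m = 0 := by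
    rcases Nat.eq_zero_or_pos m with h0 | h0
    · right; exact h0
    · left; push_cast [Nat.cast_sub h0]; ring
  rcases h4 with h4 | h4
  · omega
  · subst h4
    simp at hl
    have : darea w * 2 = hs w - 0 := by simpa using hde
    omega

lemma darea_comp (w1 w2 : List Bool) (k m : ℕ) (h1 : IsDyck w1) (hl1 : w1.length = 2*k)
    (h2 : IsDyck w2) (hl2 : w2.length = 2*m) :
    darea (true :: w1 ++ false :: w2) = darea w1 + darea w2 + k := by
  have hlen : (true :: w1 ++ false :: w2).length = 2 * (k + m + 1) := by
    rw [comp_length, hl1, hl2]; omega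
  have hW := darea_eq _ (k + m + 1) hlen
  have hd1 := darea_eq w1 k hl1
  have hd2 := darea_eq w2 m hl2
  have hhs := hs_comp w1 w2
  rw [h1.2, hl1, hl2] at hhs
  push_cast at hW hhs
  have : darea (true :: w1 ++ false :: w2) * 2 = (darea w1 + darea w2 + k) * 2 := by
    rw [hW, hhs]
    push_cast
    linarith
  linarith

lemma dheight_step (w : List Bool) (n : ℕ) (hn : n < w.length) :
    dheight w (n + 1) = dheight w n + (if w[n] then (1:ℤ) else -1) := by
  have hn' : n < (w.map (fun b => if b then (1:ℤ) else -1)).length := by simpa using hn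
  simp only [dheight, List.map_take]
  rw [List.sum_take_succ _ _ hn']
  simp [hn]

lemma dyck_decomp (w : List Bool) (N : ℕ) (h : IsDyck w) (hl : w.length = 2*N) (hN : 0 < N) :
    ∃ w1 w2 k m, IsDyck w1 ∧ IsDyck w2 ∧ w1.length = 2*k ∧ w2.length = 2*m ∧
      N = k + m + 1 ∧ w = true :: w1 ++ false :: w2 := by
  rw [isDyck_iff] at h
  have hPex : ∃ r, 0 < r ∧ dheight w r = 0 := ⟨2*N, by omega, by rw [← hl]; exact h.2⟩
  classical
  set r := Nat.find hPex with hrdef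
  obtain ⟨hr0, hrz⟩ := Nat.find_spec hPex
  have hrle : r ≤ 2*N := Nat.find_le ⟨by omega, by rw [← hl]; exact h.2⟩
  have hreven : 2 ∣ r := by
    have := dheight_parity w r (by omega)
    rw [hrz] at this
    omega
  have hr2 : 2 ≤ r := by omega
  have hmid : ∀ i, 0 < i → i < r → 1 ≤ dheight w i := by
    intro i hi0 hir
    have hne := Nat.find_min hPex hir
    push_neg at hne
    have h1 := hne hi0
    have h2 := h.1 i (by omega)
    omega
  -- first step is up
  have hw0 : w[0]'(by omega) = true := by
    cases hb : w[0]'(by omega) with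
    | true => rfl
    | false =>
      have hstep := dheight_step w 0 (by omega)
      rw [dheight_zero, hb] at hstep
      norm_num at hstep
      have := hmid 1 (by omega) (by omega)
      omega
  -- height at r-1 is 1 and step r-1 is down
  have hrm1 : dheight w (r-1) = 1 := by
    have hstep := dheight_step w (r-1) (by omega)
    have he : r - 1 + 1 = r := by omega
    rw [he, hrz] at hstep
    have hm := hmid (r-1) (by omega) (by omega)
    split at hstep <;> omega
  have hwr : w[r-1]'(by omega) = false := by
    cases hb : w[r-1]'(by omega) with
    | false => rfl
    | true =>
      have hstep := dheight_step w (r-1) (by omega)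
      have he : r - 1 + 1 = r := by omega
      rw [he, hrz, hrm1, hb] at hstep
      norm_num at hstep
  set w1 := (w.drop 1).take (r-2) with hw1def
  set w2 := w.drop r with hw2def
  have hl1 : w1.length = r - 2 := by
    rw [hw1def, List.length_take, List.length_drop, hl]
    omega
  have hl2 : w2.length = 2*N - r := by
    rw [hw2def, List.length_drop, hl]
  have heq : w = true :: w1 ++ false :: w2 := by
    have e1 : w.drop (r-1) = false :: w2 := by
      rw [List.drop_eq_getElem_cons (by omega), hwr]
      congr 1
      rw [hw2def]
      congr 1
      omega
    have e2 : w.drop 1 = w1 ++ w.drop (r-1) := by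
      conv_lhs => rw [← List.take_append_drop (r-2) (w.drop 1)]
      rw [List.drop_drop]
      congr 2
      omega
    have e3 : w = w[0]'(by omega) :: w.drop 1 := by
      conv_lhs => rw [← List.drop_zero (l := w)]
      rw [List.drop_eq_getElem_cons (by omega)]
    rw [List.cons_append, e3, hw0, e2, e1]
  -- heights of w1 and w2
  have hd1 : ∀ κ, κ ≤ w1.length → dheight w (κ+1) = 1 + dheight w1 κ := by
    intro κ hκ
    rw [heq]
    exact dh_comp1 w1 w2 κ hκ
  have hDw1 : IsDyck w1 := by
    rw [isDyck_iff]
    constructor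
    · intro κ hκ
      rcases Nat.eq_zero_or_pos κ with h0 | hpos
      · simp [h0, dheight_zero]
      · have := hd1 κ hκ
        have hm := hmid (κ+1) (by omega) (by rw [hl1] at hκ; omega)
        omega
    · have := hd1 w1.length le_rfl
      rw [hl1] at this ⊢
      have he : r - 2 + 1 = r - 1 := by omega
      rw [he] at this
      rw [hrm1] at this
      omega
  have hd2 : ∀ j, dheight w (r + j) = dheight w2 j := by
    intro j
    have e : r + j = w1.length + 2 + j := by omega
    rw [e, heq]
    rw [dh_comp2 w1 w2 j, hDw1.2]
    ring
  have hDw2 : IsDyck w2 := by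
    rw [isDyck_iff]
    constructor
    · intro j hj
      rw [← hd2 j]
      exact h.1 (r+j) (by rw [hl2] at hj; omega)
    · rw [← hd2 w2.length, hl2]
      have e : r + (2*N - r) = w.length := by omega
      rw [e]
      exact h.2
  refine ⟨w1, w2, (r-2)/2, (2*N-r)/2, hDw1, hDw2, by omega, by omega, by omega, heq⟩

lemma my_sum_image_le {α β : Type*} [DecidableEq β] (s : Finset α) (f : α → β) (g : β → ℝ)
    (hg : ∀ b, 0 ≤ g b) : ∑ b ∈ s.image f, g b ≤ ∑ a ∈ s, g (f a) := by
  classical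
  induction s using Finset.induction_on with
  | empty => simp
  | @insert a s ha ih =>
    rw [Finset.image_insert, Finset.sum_insert ha]
    by_cases hfa : f a ∈ s.image f
    · rw [Finset.insert_eq_self.mpr hfa]
      have := hg (f a)
      linarith
    · rw [Finset.sum_insert hfa]
      linarith

open scoped Classical in
noncomputable def dyckFinset (N : ℕ) : Finset (List Bool) :=
  ((Finset.univ : Finset (Fin (2*N) → Bool)).filter (fun f => IsDyck (List.ofFn f))).image
    List.ofFn

lemma mem_dyckFinset {N : ℕ} {w : List Bool} :
    w ∈ dyckFinset N ↔ w.length = 2*N ∧ IsDyck w := by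
  classical
  constructor
  · intro hw
    simp only [dyckFinset, Finset.mem_image, Finset.mem_filter] at hw
    obtain ⟨f, ⟨-, hf⟩, rfl⟩ := hw
    exact ⟨by simp, hf⟩
  · rintro ⟨hlen, hD⟩
    simp only [dyckFinset, Finset.mem_image, Finset.mem_filter]
    refine ⟨fun i => w[(i:ℕ)]'(by omega), ⟨Finset.mem_univ _, ?_⟩, ?_⟩ <;>
    · have : List.ofFn (fun i : Fin (2*N) => w[(i:ℕ)]'(by omega)) = w := by
        apply List.ext_getElem
        · simp [hlen]
        · intro i h1 h2
          simp
      simp [this, hD]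

open scoped Classical in
lemma Gqs_eq (N : ℕ) (q : ℝ) : Gqs N q 1 = ∑ w ∈ dyckFinset N, q ^ (darea w).toNat := by
  rw [Gqs, dyckFinset]
  rw [Finset.sum_image (by intro x _ y _ h; exact List.ofFn_injective h)]
  rw [← Finset.sum_filter]
  apply Finset.sum_congr rfl
  intro f hf
  simp

lemma isDyck_nil : IsDyck ([] : List Bool) := by
  constructor
  · intro k _
    simp [dheight_nil]
  · simp [dheight_nil]

lemma Gqs_zero (q : ℝ) : Gqs 0 q 1 = 1 := by
  rw [Gqs_eq]
  have : dyckFinset 0 = {[]} := by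
    ext w
    rw [mem_dyckFinset]
    simp only [Finset.mem_singleton]
    constructor
    · rintro ⟨hl, -⟩
      exact List.eq_nil_of_length_eq_zero (by omega)
    · rintro rfl
      exact ⟨rfl, isDyck_nil⟩
  rw [this, Finset.sum_singleton]
  have : darea [] = 0 := by simp [darea]
  simp [this]

lemma gqs_nonneg_terms (q : ℝ) (hq : 1 ≤ q) (w : List Bool) : (0:ℝ) ≤ q ^ (darea w).toNat :=
  pow_nonneg (by linarith) _

set_option maxHeartbeats 1000000 in
lemma gqs_lower (q : ℝ) (hq : 1 ≤ q) (N : ℕ) :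
    q ^ N * Gqs N q 1 ≤ Gqs (N+1) q 1 := by
  classical
  rw [Gqs_eq, Gqs_eq, Finset.mul_sum]
  set ι : List Bool → List Bool := fun w => true :: w ++ false :: [] with hι
  have hsub : (dyckFinset N).image ι ⊆ dyckFinset (N+1) := by
    intro v hv
    simp only [Finset.mem_image] at hv
    obtain ⟨w, hw, rfl⟩ := hv
    rw [mem_dyckFinset] at hw ⊢
    constructor
    · rw [hι, comp_length]
      simp [hw.1]; omega
    · exact isDyck_comp w [] hw.2 isDyck_nil
  have hinj : ∀ x ∈ dyckFinset N, ∀ y ∈ dyckFinset N, ι x = ι y → x = y := by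
    intro x _ y _ hxy
    simpa [hι] using hxy
  calc ∑ w ∈ dyckFinset N, q ^ N * q ^ (darea w).toNat
      = ∑ w ∈ dyckFinset N, q ^ (darea (ι w)).toNat := by
        apply Finset.sum_congr rfl
        intro w hw
        rw [mem_dyckFinset] at hw
        have hda : darea (ι w) = darea w + N := by
          have h0 := darea_comp w [] N 0 hw.2 hw.1 isDyck_nil rfl
          have h1 : darea ([] : List Bool) = 0 := by simp [darea]
          rw [h1] at h0
          simpa [hι] using h0
        have hnn := darea_nonneg w N hw.2 hw.1
        have : (darea (ι w)).toNat = (darea w).toNat + N := by rw [hda]; omega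
        rw [this, pow_add]
        ring
    _ = ∑ v ∈ (dyckFinset N).image ι, q ^ (darea v).toNat := (Finset.sum_image (f := fun v => q ^ (darea v).toNat) hinj).symm
    _ ≤ ∑ v ∈ dyckFinset (N+1), q ^ (darea v).toNat := by
        apply Finset.sum_le_sum_of_subset_of_nonneg hsub
        intro v _ _
        exact gqs_nonneg_terms q hq v

lemma gqs_pos (q : ℝ) (hq : 1 ≤ q) (N : ℕ) : 0 < Gqs N q 1 := by
  induction N with
  | zero => rw [Gqs_zero]; norm_num
  | succ n ih =>
    have := gqs_lower q hq n
    have hqn : (0:ℝ) < q ^ n := pow_pos (by linarith) n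
    nlinarith

def tri : ℕ → ℕ
  | 0 => 0
  | (n+1) => tri n + n

lemma tri_add (k j : ℕ) : tri (k + j) = tri k + tri j + k * j := by
  induction j with
  | zero => simp [tri]
  | succ j ih =>
    have : k + (j+1) = (k + j) + 1 := by omega
    rw [this, tri, ih, tri]
    ring

lemma tri_eq (m : ℕ) : 2 * tri m = m * (m - 1) := by
  induction m with
  | zero => simp [tri]
  | succ m ih =>
    rw [tri]
    have h2 : (m+1) * ((m+1) - 1) = m * (m-1) + 2 * m := by
      cases m with
      | zero => simp
      | succ t => simp; ring
    omega

lemma gqs_crude (q : ℝ) (hq : 1 ≤ q) (N : ℕ) : Gqs N q 1 ≤ 4 ^ N * q ^ tri N := by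
  classical
  rw [Gqs_eq]
  have hcard : (dyckFinset N).card ≤ 4 ^ N := by
    calc (dyckFinset N).card
        ≤ ((Finset.univ : Finset (Fin (2*N) → Bool)).filter
            (fun f => IsDyck (List.ofFn f))).card := Finset.card_image_le
      _ ≤ (Finset.univ : Finset (Fin (2*N) → Bool)).card := Finset.card_filter_le _ _
      _ = 2 ^ (2*N) := by simp [Fintype.card_fun]
      _ = 4 ^ N := by rw [pow_mul]; norm_num
  calc ∑ w ∈ dyckFinset N, q ^ (darea w).toNat
      ≤ ∑ _w ∈ dyckFinset N, q ^ tri N := by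
        apply Finset.sum_le_sum
        intro w hw
        rw [mem_dyckFinset] at hw
        have hle : (darea w).toNat ≤ N * (N-1) / 2 := darea_le w N hw.2 hw.1
        have htri : N * (N-1) / 2 = tri N := by
          have := tri_eq N
          omega
        exact pow_le_pow_right₀ hq (by omega)
    _ = (dyckFinset N).card * q ^ tri N := by rw [Finset.sum_const, nsmul_eq_mul]
    _ ≤ (4:ℝ) ^ N * q ^ tri N := by
        have hqp : (0:ℝ) ≤ q ^ tri N := pow_nonneg (by linarith) _
        have : ((dyckFinset N).card : ℝ) ≤ (4:ℝ)^N := by exact_mod_cast hcard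
        nlinarith
  
lemma gqs_chain (q : ℝ) (hq : 1 ≤ q) (m n : ℕ) (h : m ≤ n) :
    q ^ tri n * Gqs m q 1 ≤ q ^ tri m * Gqs n q 1 := by
  induction n with
  | zero =>
    have : m = 0 := by omega
    subst this
    rfl
  | succ n ih =>
    rcases Nat.lt_or_ge m (n+1) with hlt | hge
    · have h1 := ih (by omega)
      have h2 := gqs_lower q hq n
      have hq0 : (0:ℝ) < q := by linarith
      have e1 : tri (n+1) = tri n + n := rfl
      rw [e1, pow_add]
      calc q ^ tri n * q ^ n * Gqs m q 1 = q ^ n * (q ^ tri n * Gqs m q 1) := by ring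
        _ ≤ q ^ n * (q ^ tri m * Gqs n q 1) := by
            apply mul_le_mul_of_nonneg_left h1 (pow_nonneg (le_of_lt hq0) n)
        _ = q ^ tri m * (q ^ n * Gqs n q 1) := by ring
        _ ≤ q ^ tri m * Gqs (n+1) q 1 := by
            apply mul_le_mul_of_nonneg_left h2 (pow_nonneg (le_of_lt hq0) _)
    · have : m = n+1 := by omega
      subst this
      rfl

set_option maxHeartbeats 1000000 in
lemma gqs_upper (q : ℝ) (hq : 1 ≤ q) (N : ℕ) :
    Gqs (N+1) q 1 ≤ ∑ k ∈ Finset.range (N+1), q ^ k * Gqs k q 1 * Gqs (N-k) q 1 := by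
  classical
  rw [Gqs_eq]
  set T := (Finset.range (N+1)).sigma (fun k => (dyckFinset k) ×ˢ (dyckFinset (N-k))) with hT
  set Ψ : (Σ _ : ℕ, List Bool × List Bool) → List Bool :=
    fun p => true :: p.2.1 ++ false :: p.2.2 with hΨ
  have hsub : dyckFinset (N+1) ⊆ T.image Ψ := by
    intro w hw
    rw [mem_dyckFinset] at hw
    obtain ⟨w1, w2, k, m, hD1, hD2, hl1, hl2, hsum, heq⟩ :=
      dyck_decomp w (N+1) hw.2 hw.1 (by omega)
    simp only [Finset.mem_image]
    refine ⟨⟨k, (w1, w2)⟩, ?_, heq.symm⟩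
    simp only [hT, Finset.mem_sigma, Finset.mem_range, Finset.mem_product]
    refine ⟨by omega, ?_, ?_⟩ <;> rw [mem_dyckFinset]
    · exact ⟨hl1, hD1⟩
    · exact ⟨by rw [hl2]; omega, hD2⟩
  calc ∑ w ∈ dyckFinset (N+1), q ^ (darea w).toNat
      ≤ ∑ w ∈ T.image Ψ, q ^ (darea w).toNat :=
        Finset.sum_le_sum_of_subset_of_nonneg hsub (fun w _ _ => gqs_nonneg_terms q hq w)
    _ ≤ ∑ p ∈ T, q ^ (darea (Ψ p)).toNat :=
        my_sum_image_le T Ψ (fun w => q ^ (darea w).toNat) (gqs_nonneg_terms q hq)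
    _ = ∑ k ∈ Finset.range (N+1), ∑ p ∈ (dyckFinset k) ×ˢ (dyckFinset (N-k)),
          q ^ (darea (Ψ ⟨k, p⟩)).toNat := Finset.sum_sigma _ _ _
    _ = ∑ k ∈ Finset.range (N+1), q ^ k * Gqs k q 1 * Gqs (N-k) q 1 := by
        apply Finset.sum_congr rfl
        intro k _
        rw [Finset.sum_product]
        have hstep : ∀ w1 ∈ dyckFinset k, ∀ w2 ∈ dyckFinset (N-k),
            q ^ (darea (Ψ ⟨k, (w1, w2)⟩)).toNat
              = (q ^ k * q ^ (darea w1).toNat) * q ^ (darea w2).toNat := by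
          intro w1 h1 w2 h2
          rw [mem_dyckFinset] at h1 h2
          have hda := darea_comp w1 w2 k (N-k) h1.2 h1.1 h2.2 h2.1
          have hn1 := darea_nonneg w1 k h1.2 h1.1
          have hn2 := darea_nonneg w2 (N-k) h2.2 h2.1
          have htn : (darea (Ψ ⟨k, (w1, w2)⟩)).toNat
              = k + (darea w1).toNat + (darea w2).toNat := by
            simp only [hΨ]
            rw [hda]
            omega
          rw [htn, pow_add, pow_add]
        calc ∑ w1 ∈ dyckFinset k, ∑ w2 ∈ dyckFinset (N-k), q ^ (darea (Ψ ⟨k, (w1, w2)⟩)).toNat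
            = ∑ w1 ∈ dyckFinset k, ∑ w2 ∈ dyckFinset (N-k),
                (q ^ k * q ^ (darea w1).toNat) * q ^ (darea w2).toNat := by
              apply Finset.sum_congr rfl
              intro w1 h1
              apply Finset.sum_congr rfl
              intro w2 h2
              exact hstep w1 h1 w2 h2
          _ = (∑ w1 ∈ dyckFinset k, q ^ k * q ^ (darea w1).toNat) *
                (∑ w2 ∈ dyckFinset (N-k), q ^ (darea w2).toNat) := by
              rw [Finset.sum_mul_sum]
          _ = q ^ k * Gqs k q 1 * Gqs (N-k) q 1 := by
              rw [Gqs_eq, Gqs_eq, ← Finset.mul_sum]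

lemma gqs_key (q : ℝ) (hq : 1 ≤ q) (n k : ℕ) (hk : k < n)
    (h4 : 4 ≤ (Real.sqrt q) ^ n) :
    (Real.sqrt q) ^ n * (q ^ k * Gqs k q 1 * Gqs (n-k) q 1) ≤ q ^ n * Gqs n q 1 := by
  set s := Real.sqrt q with hsdef
  set j := n - k with hjdef
  have hkj : k + j = n := by omega
  have hj1 : 1 ≤ j := by omega
  have hq0 : (0:ℝ) ≤ q := by linarith
  have hs1 : (1:ℝ) ≤ s := Real.one_le_sqrt.mpr hq
  have hsq : s ^ 2 = q := Real.sq_sqrt hq0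
  have hpow : ∀ a : ℕ, q ^ a = s ^ (2 * a) := by
    intro a
    rw [← hsq, ← pow_mul]
  have hCk := gqs_pos q hq k
  have hCj := gqs_pos q hq j
  have hCn := gqs_pos q hq n
  have htrin : 0 < q ^ tri n := pow_pos (by linarith) _
  have hexp : ∀ c : ℕ, (0:ℝ) < s ^ c := fun c => pow_pos (by linarith) c
  -- main exponent inequality, proven in both cases
  have key2 : ∀ a b : ℕ, a + b = n → a * (a + 1) ≤ b * (a + 1) →
      s ^ n * q ^ a * 4 ^ a * q ^ (tri a) * q ^ (tri b) ≤ q ^ n * q ^ (tri n) := by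
    intro a b hab hineq
    have h4a : (4:ℝ) ^ a ≤ (s ^ n) ^ a := by
      apply pow_le_pow_left₀ (by norm_num) h4
    have e1 : s ^ n * q ^ a * 4 ^ a * q ^ tri a * q ^ tri b
        ≤ s ^ n * q ^ a * (s^n) ^ a * q ^ tri a * q ^ tri b := by
      have hX : (0:ℝ) ≤ s^n * q^a * q^(tri a) * q^(tri b) := by positivity
      calc s^n*q^a*4^a*q^(tri a)*q^(tri b) = 4^a * (s^n*q^a*q^(tri a)*q^(tri b)) := by ring
        _ ≤ (s^n)^a * (s^n*q^a*q^(tri a)*q^(tri b)) := mul_le_mul_of_nonneg_right h4a hX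
        _ = s^n*q^a*(s^n)^a*q^(tri a)*q^(tri b) := by ring
    have e2 : s ^ n * q ^ a * (s^n) ^ a * q ^ tri a * q ^ tri b
        = s ^ (n + 2*a + n*a + 2 * tri a + 2 * tri b) := by
      rw [hpow a, hpow (tri a), hpow (tri b), ← pow_mul]
      rw [← pow_add, ← pow_add, ← pow_add, ← pow_add]
    have e3 : q ^ n * q ^ tri n = s ^ (2*n + 2*tri n) := by
      rw [hpow n, hpow (tri n), ← pow_add]
    have eexp : n + 2*a + n*a + 2 * tri a + 2 * tri b ≤ 2*n + 2*tri n := by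
      have htri : tri n = tri a + tri b + a * b := by rw [← hab, tri_add]
      subst hab
      nlinarith [hineq]
    calc s ^ n * q ^ a * 4 ^ a * q ^ tri a * q ^ tri b
        ≤ s ^ n * q ^ a * (s^n) ^ a * q ^ tri a * q ^ tri b := e1
      _ = s ^ (n + 2*a + n*a + 2 * tri a + 2 * tri b) := e2
      _ ≤ s ^ (2*n + 2*tri n) := pow_le_pow_right₀ hs1 eexp
      _ = q ^ n * q ^ tri n := e3.symm
  -- reduce to multiplied-out form
  rw [← mul_le_mul_iff_of_pos_right htrin]
  rcases le_or_gt k j with hcase | hcase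
  · -- use crude on k, chain on j
    have E2 := gqs_crude q hq k
    have E1 := gqs_chain q hq j n (by omega)
    have K := key2 k j hkj (by nlinarith)
    calc s ^ n * (q ^ k * Gqs k q 1 * Gqs j q 1) * q ^ tri n
        = (s^n * q^k) * Gqs k q 1 * (q ^ tri n * Gqs j q 1) := by ring
      _ ≤ (s^n * q^k) * (4^k * q^(tri k)) * (q ^ tri n * Gqs j q 1) := by
          apply mul_le_mul_of_nonneg_right _ (by positivity)
          apply mul_le_mul_of_nonneg_left E2 (by positivity)
      _ ≤ (s^n * q^k) * (4^k * q^(tri k)) * (q ^ tri j * Gqs n q 1) := by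
          apply mul_le_mul_of_nonneg_left E1 (by positivity)
      _ = (s ^ n * q ^ k * 4 ^ k * q ^ (tri k) * q ^ (tri j)) * Gqs n q 1 := by ring
      _ ≤ (q ^ n * q ^ tri n) * Gqs n q 1 := by
          apply mul_le_mul_of_nonneg_right K (le_of_lt hCn)
      _ = q ^ n * Gqs n q 1 * q ^ tri n := by ring
  · -- use crude on j, chain on k
    have E2 := gqs_crude q hq j
    have E1 := gqs_chain q hq k n (by omega)
    have K : s ^ n * q ^ k * 4 ^ j * q ^ (tri j) * q ^ (tri k) ≤ q ^ n * q ^ tri n := by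
      -- adapt key2: exponents differ (4^j instead of 4^a matching q^a)
      have h4a : (4:ℝ) ^ j ≤ (s ^ n) ^ j := pow_le_pow_left₀ (by norm_num) h4 j
      have e1 : s ^ n * q ^ k * 4 ^ j * q ^ tri j * q ^ tri k
          ≤ s ^ n * q ^ k * (s^n) ^ j * q ^ tri j * q ^ tri k := by
        have hX : (0:ℝ) ≤ s^n * q^k * q^(tri j) * q^(tri k) := by positivity
        calc s^n*q^k*4^j*q^(tri j)*q^(tri k) = 4^j * (s^n*q^k*q^(tri j)*q^(tri k)) := by ring
          _ ≤ (s^n)^j * (s^n*q^k*q^(tri j)*q^(tri k)) := mul_le_mul_of_nonneg_right h4a hX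
          _ = s^n*q^k*(s^n)^j*q^(tri j)*q^(tri k) := by ring
      have e2 : s ^ n * q ^ k * (s^n) ^ j * q ^ tri j * q ^ tri k
          = s ^ (n + 2*k + n*j + 2 * tri j + 2 * tri k) := by
        rw [hpow k, hpow (tri j), hpow (tri k), ← pow_mul]
        rw [← pow_add, ← pow_add, ← pow_add, ← pow_add]
      have e3 : q ^ n * q ^ tri n = s ^ (2*n + 2*tri n) := by
        rw [hpow n, hpow (tri n), ← pow_add]
      have eexp : n + 2*k + n*j + 2 * tri j + 2 * tri k ≤ 2*n + 2*tri n := by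
        have htri : tri n = tri k + tri j + k * j := by rw [← hkj, tri_add]
        -- need: n + 2k + nj ≤ 2n + 2kj with n = k+j, j ≤ k, 1 ≤ j
        nlinarith [htri, hkj, hcase, hj1]
      calc s ^ n * q ^ k * 4 ^ j * q ^ tri j * q ^ tri k
          ≤ s ^ n * q ^ k * (s^n) ^ j * q ^ tri j * q ^ tri k := e1
        _ = s ^ (n + 2*k + n*j + 2 * tri j + 2 * tri k) := e2
        _ ≤ s ^ (2*n + 2*tri n) := pow_le_pow_right₀ hs1 eexp
        _ = q ^ n * q ^ tri n := e3.symm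
    calc s ^ n * (q ^ k * Gqs k q 1 * Gqs j q 1) * q ^ tri n
        = (s^n * q^k) * Gqs j q 1 * (q ^ tri n * Gqs k q 1) := by ring
      _ ≤ (s^n * q^k) * (4^j * q^(tri j)) * (q ^ tri n * Gqs k q 1) := by
          apply mul_le_mul_of_nonneg_right _ (by positivity)
          apply mul_le_mul_of_nonneg_left E2 (by positivity)
      _ ≤ (s^n * q^k) * (4^j * q^(tri j)) * (q ^ tri k * Gqs n q 1) := by
          apply mul_le_mul_of_nonneg_left E1 (by positivity)
      _ = (s ^ n * q ^ k * 4 ^ j * q ^ (tri j) * q ^ (tri k)) * Gqs n q 1 := by ring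
      _ ≤ (q ^ n * q ^ tri n) * Gqs n q 1 := by
          apply mul_le_mul_of_nonneg_right K (le_of_lt hCn)
      _ = q ^ n * Gqs n q 1 * q ^ tri n := by ring

/-- For `q > 1`, `q^{N−1} C_{N−1}(q)/C_N(q) → 1` as `N → ∞`, with
`C_N(q) = G_N(q,1)` the Carlitz–Riordan q-Catalan number. -/
theorem qCatalan_ratio_tendsto (q : ℝ) (hq : 1 < q) :
    Filter.Tendsto (fun N : ℕ => q ^ (N - 1) * Gqs (N - 1) q 1 / Gqs N q 1)
      Filter.atTop (nhds 1) := by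
  have hq1 : 1 ≤ q := le_of_lt hq
  set s := Real.sqrt q with hsdef
  have hs : 1 < s := by
    rw [hsdef]
    rw [show (1:ℝ) = Real.sqrt 1 by simp]
    exact Real.sqrt_lt_sqrt (by norm_num) hq
  have hs0 : 0 < s := by linarith
  -- the error term
  set g : ℕ → ℝ := fun N => 1 - ((N - 1 : ℕ) : ℝ) * (s⁻¹) ^ (N - 1 : ℕ) with hgdef
  have hg_tendsto : Filter.Tendsto g Filter.atTop (nhds 1) := by
    have hinv : ‖s⁻¹‖ < 1 := by
      rw [Real.norm_eq_abs, abs_of_pos (by positivity)]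
      rw [inv_lt_one_iff₀]
      right; exact hs
    have h1 : Filter.Tendsto (fun n : ℕ => (n:ℝ) * (s⁻¹) ^ n) Filter.atTop (nhds 0) := by
      have := (summable_pow_mul_geometric_of_norm_lt_one 1 hinv).tendsto_atTop_zero
      simpa using this
    have h2 : Filter.Tendsto (fun N : ℕ => ((N - 1 : ℕ) : ℝ) * (s⁻¹) ^ (N - 1 : ℕ))
        Filter.atTop (nhds 0) := h1.comp (Filter.tendsto_sub_atTop_nat 1)
    have := (tendsto_const_nhds (x := (1:ℝ)) (f := Filter.atTop)).sub h2
    rw [hgdef]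
    simpa only [sub_zero] using this
  have hev4 : ∀ᶠ N : ℕ in Filter.atTop, 4 ≤ s ^ (N - 1 : ℕ) := by
    have h1 : ∀ᶠ m : ℕ in Filter.atTop, 4 ≤ s ^ m :=
      (tendsto_pow_atTop_atTop_of_one_lt hs).eventually_ge_atTop 4
    exact (Filter.tendsto_sub_atTop_nat 1).eventually h1
  have hev1 : ∀ᶠ N : ℕ in Filter.atTop, 1 ≤ N := Filter.eventually_ge_atTop 1
  apply tendsto_of_tendsto_of_tendsto_of_le_of_le' hg_tendsto tendsto_const_nhds
  · -- lower bound
    filter_upwards [hev4, hev1] with N h4 h1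
    set n := N - 1 with hndef
    have hNn : N = n + 1 := by omega
    have hCn := gqs_pos q hq1 n
    have hCN := gqs_pos q hq1 N
    have hP : (0:ℝ) < q ^ n * Gqs n q 1 := by positivity
    have hPle : q ^ n * Gqs n q 1 ≤ Gqs N q 1 := by
      rw [hNn]; exact gqs_lower q hq1 n
    set D := ∑ k ∈ Finset.range n, q ^ k * Gqs k q 1 * Gqs (n-k) q 1 with hDdef
    have hD0 : 0 ≤ D := by
      apply Finset.sum_nonneg
      intro k _
      have := gqs_pos q hq1 k
      have := gqs_pos q hq1 (n-k)
      positivity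
    have hCND : Gqs N q 1 ≤ D + q ^ n * Gqs n q 1 := by
      rw [hNn]
      calc Gqs (n+1) q 1 ≤ ∑ k ∈ Finset.range (n+1), q ^ k * Gqs k q 1 * Gqs (n-k) q 1 :=
            gqs_upper q hq1 n
        _ = D + q ^ n * Gqs n q 1 * Gqs (n-n) q 1 := by rw [Finset.sum_range_succ]
        _ = D + q ^ n * Gqs n q 1 := by
            rw [Nat.sub_self, Gqs_zero, mul_one]
    have hDkey : s ^ n * D ≤ (n:ℝ) * (q ^ n * Gqs n q 1) := by
      calc s ^ n * D = ∑ k ∈ Finset.range n, s ^ n * (q ^ k * Gqs k q 1 * Gqs (n-k) q 1) := by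
            rw [hDdef, Finset.mul_sum]
        _ ≤ ∑ k ∈ Finset.range n, q ^ n * Gqs n q 1 := by
            apply Finset.sum_le_sum
            intro k hk
            exact gqs_key q hq1 n k (Finset.mem_range.mp hk) h4
        _ = (n:ℝ) * (q ^ n * Gqs n q 1) := by
            rw [Finset.sum_const, Finset.card_range, nsmul_eq_mul]
    have hsn : (0:ℝ) < s ^ n := by positivity
    have hDle : D ≤ (n:ℝ) * (s⁻¹) ^ n * (q ^ n * Gqs n q 1) := by
      have h := mul_le_mul_of_nonneg_left hDkey (le_of_lt (inv_pos.mpr hsn))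
      rw [← mul_assoc, inv_mul_cancel₀ (ne_of_gt hsn), one_mul] at h
      rw [inv_pow]
      calc D ≤ (s^n)⁻¹ * ((n:ℝ) * (q ^ n * Gqs n q 1)) := h
        _ = (n:ℝ) * (s^n)⁻¹ * (q ^ n * Gqs n q 1) := by ring
    have hDC : D / Gqs N q 1 ≤ (n:ℝ) * (s⁻¹) ^ n := by
      calc D / Gqs N q 1 ≤ D / (q ^ n * Gqs n q 1) :=
            div_le_div_of_nonneg_left hD0 hP hPle
        _ ≤ ((n:ℝ) * (s⁻¹) ^ n * (q ^ n * Gqs n q 1)) / (q ^ n * Gqs n q 1) := by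
            gcongr
        _ = (n:ℝ) * (s⁻¹) ^ n := mul_div_cancel_right₀ _ (ne_of_gt hP)
    have hfinal : 1 - D / Gqs N q 1 ≤ q ^ n * Gqs n q 1 / Gqs N q 1 := by
      have h1 : (Gqs N q 1 - D) / Gqs N q 1 ≤ (q ^ n * Gqs n q 1) / Gqs N q 1 := by
        gcongr
        linarith
      rw [sub_div, div_self (ne_of_gt hCN)] at h1
      exact h1
    show 1 - ((N - 1 : ℕ) : ℝ) * (s⁻¹) ^ (N - 1 : ℕ) ≤ _
    calc 1 - ((N - 1 : ℕ) : ℝ) * (s⁻¹) ^ (N - 1 : ℕ)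
        = 1 - (n:ℝ) * (s⁻¹) ^ n := rfl
      _ ≤ 1 - D / Gqs N q 1 := by linarith
      _ ≤ q ^ n * Gqs n q 1 / Gqs N q 1 := hfinal
  · -- upper bound
    filter_upwards [hev1] with N h1
    have hCN := gqs_pos q hq1 N
    have hPle : q ^ (N-1 : ℕ) * Gqs (N-1 : ℕ) q 1 ≤ Gqs N q 1 := by
      have := gqs_lower q hq1 (N-1)
      have hNn : N - 1 + 1 = N := by omega
      rwa [hNn] at this
    rw [div_le_one hCN]
    exact hPle
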